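/- With the setup of the previous statement, every element of the subgroup G_{i⁻} generated by {γ_j : j < i} can be written uniquely in the form Σ_{j<i} m_j·γ_j where m_j = 0 for all but finitely many j, 0 ≤ m_j < n_j whenever n_j ≠ ∞, and m_j ∈ ℤ when n_j = ∞. -/

import Mathlib

section Aux

variable {Ψ : Type*} [AddCommGroup Ψ] (γ : Ordinal → Ψ)


private lemma sum_smul_add (m₁ m₂ : Ordinal →₀ ℤ) :
    ((m₁ + m₂).sum fun k c => c • γ k) =
      (m₁.sum fun k c => c • γ k) + m₂.sum fun k c => c • γ k :=
  Finsupp.sum_add_index' (fun a => zero_smul ℤ (γ a))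
    (fun a b₁ b₂ => add_smul b₁ b₂ (γ a))

private lemma sum_smul_single (j : Ordinal) (c : ℤ) :
    ((Finsupp.single j c).sum fun k c => c • γ k) = c • γ j :=
  Finsupp.sum_single_index (zero_smul ℤ (γ j))

private lemma sum_smul_neg (m : Ordinal →₀ ℤ) :
    ((-m).sum fun k c => c • γ k) = -(m.sum fun k c => c • γ k) := by
  rw [Finsupp.sum, Finsupp.sum, Finsupp.support_neg, ← Finset.sum_neg_distrib]
  exact Finset.sum_congr rfl fun k _ => by simp [neg_smul]

private lemma mem_closure_iff_rep (i : Ordinal) (x : Ψ) :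
    x ∈ AddSubgroup.closure {y | ∃ j < i, y = γ j} ↔
      ∃ m : Ordinal →₀ ℤ, (∀ k ∈ m.support, k < i) ∧
        x = m.sum fun k c => c • γ k := by
  constructor
  · intro hx
    induction hx using AddSubgroup.closure_induction with
    | mem y hy =>
      obtain ⟨j, hj, rfl⟩ := hy
      refine ⟨Finsupp.single j 1, ?_, ?_⟩
      · intro k hk
        have := Finsupp.support_single_subset hk
        simp only [Finset.mem_singleton] at this
        subst this; exact hj
      · rw [sum_smul_single, one_smul]
    | zero => exact ⟨0, by simp, by simp [Finsupp.sum_zero_index]⟩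
    | add a b _ _ ha hb =>
      obtain ⟨m₁, hm₁, rfl⟩ := ha
      obtain ⟨m₂, hm₂, rfl⟩ := hb
      refine ⟨m₁ + m₂, ?_, ?_⟩
      · intro k hk
        rcases Finset.mem_union.1 (Finsupp.support_add hk) with h | h
        · exact hm₁ k h
        · exact hm₂ k h
      · rw [sum_smul_add]
    | neg a _ ha =>
      obtain ⟨m, hm, rfl⟩ := ha
      refine ⟨-m, ?_, ?_⟩
      · intro k hk; exact hm k (by simpa using hk)
      · rw [sum_smul_neg]
  · rintro ⟨m, hm, rfl⟩
    refine AddSubgroup.sum_mem _ fun k hk => ?_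
    have hγ : γ k ∈ ({y | ∃ j < i, y = γ j} : Set Ψ) := ⟨k, hm k hk, rfl⟩
    exact AddSubgroup.zsmul_mem _ (AddSubgroup.subset_closure hγ) _

variable (n : Ordinal → ℕ∞)
variable (hn : ∀ i : Ordinal, n i = sInf {r : ℕ∞ | ∃ r' : ℕ, r = (r' : ℕ∞) ∧ 0 < r' ∧
      (r' : ℤ) • γ i ∈ AddSubgroup.closure {x | ∃ j < i, x = γ j}})

include hn in
private lemma n_attained {j : Ordinal} (hj : n j ≠ ⊤) :
    ∃ N : ℕ, n j = (N : ℕ∞) ∧ 0 < N ∧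
      (N : ℤ) • γ j ∈ AddSubgroup.closure {x | ∃ k < j, x = γ k} := by
  have hne : {r : ℕ∞ | ∃ r' : ℕ, r = (r' : ℕ∞) ∧ 0 < r' ∧
      (r' : ℤ) • γ j ∈ AddSubgroup.closure {x | ∃ k < j, x = γ k}}.Nonempty := by
    by_contra h
    rw [Set.not_nonempty_iff_eq_empty] at h
    exact hj (by rw [hn j, h, sInf_empty])
  have hmem := csInf_mem hne
  rw [← hn j] at hmem
  rw [Set.mem_setOf_eq] at hmem
  obtain ⟨N, h1, h2, h3⟩ := hmem
  exact ⟨N, h1, h2, h3⟩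

include hn in
private lemma n_le_of_mem {j : Ordinal} {N : ℕ} (hN : 0 < N)
    (h : (N : ℤ) • γ j ∈ AddSubgroup.closure {x | ∃ k < j, x = γ k}) :
    n j ≤ (N : ℕ∞) := by
  rw [hn j]
  exact sInf_le ⟨N, rfl, hN, h⟩

include hn in
private lemma exists_digit_rep (i : Ordinal) :
    ∀ x ∈ AddSubgroup.closure {y | ∃ j < i, y = γ j},
      ∃ m : Ordinal →₀ ℤ, (∀ k ∈ m.support, k < i) ∧
        (∀ k, n k ≠ ⊤ → 0 ≤ m k ∧ ((m k).toNat : ℕ∞) < n k) ∧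
        x = m.sum fun k c => c • γ k := by
  induction i using Ordinal.induction with
  | h i IH =>
  intro x hx
  obtain ⟨m, hmlt, rfl⟩ := (mem_closure_iff_rep γ i x).1 hx
  rcases eq_or_ne m.support ∅ with hs | hs
  · refine ⟨0, by simp, ?_, ?_⟩
    · intro k hk
      obtain ⟨N, hN1, hN2, _⟩ := n_attained γ n hn hk
      simp only [Finsupp.coe_zero, Pi.zero_apply, le_refl, Int.toNat_zero, Nat.cast_zero,
        true_and, hN1]
      exact_mod_cast hN2
    · rw [Finsupp.sum, hs, Finset.sum_empty]; simp
  · have hne : m.support.Nonempty := Finset.nonempty_iff_ne_empty.2 hs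
    set j' := m.support.max' hne with hj'
    have hj'mem : j' ∈ m.support := m.support.max'_mem hne
    have hj'i : j' < i := hmlt _ hj'mem
    have hle : ∀ k ∈ m.support, k ≤ j' := fun k hk => m.support.le_max' k hk
    -- split off the top term
    have hsplit : (m.sum fun k c => c • γ k) =
        m j' • γ j' + ∑ k ∈ m.support.erase j', m k • γ k := by
      rw [Finsupp.sum, ← Finset.add_sum_erase _ _ hj'mem]
    have hrest : ∀ k ∈ m.support.erase j', k < j' := by
      intro k hk
      rcases Finset.mem_erase.1 hk with ⟨hne', hk'⟩
      exact lt_of_le_of_ne (hle k hk') hne'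
    have hy : (∑ k ∈ m.support.erase j', m k • γ k) ∈
        AddSubgroup.closure {y | ∃ j < j', y = γ j} := by
      refine AddSubgroup.sum_mem _ fun k hk => ?_
      have hγ : γ k ∈ ({y | ∃ j < j', y = γ j} : Set Ψ) := ⟨k, hrest k hk, rfl⟩
      exact AddSubgroup.zsmul_mem _ (AddSubgroup.subset_closure hγ) _
    rcases eq_or_ne (n j') ⊤ with htop | htop
    · -- no constraint at j'
      obtain ⟨m', hm'lt, hm'dig, hm'sum⟩ := IH j' hj'i _ hy
      refine ⟨m' + Finsupp.single j' (m j'), ?_, ?_, ?_⟩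
      · intro k hk
        rcases Finset.mem_union.1 (Finsupp.support_add hk) with h | h
        · exact lt_trans (hm'lt k h) hj'i
        · have := Finsupp.support_single_subset h
          simp only [Finset.mem_singleton] at this
          subst this; exact hj'i
      · intro k hk
        by_cases hkj : k = j'
        · rw [hkj] at hk; exact absurd htop hk
        · simpa [Finsupp.single_apply, Ne.symm hkj] using hm'dig k hk
      · rw [sum_smul_add, sum_smul_single, hsplit, ← hm'sum, add_comm]
    · -- finite case: reduce mod N
      obtain ⟨N, hN1, hN2, hN3⟩ := n_attained γ n hn htop
      set c := m j' with hc
      set q := c / (N : ℤ) with hq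
      set r := c % (N : ℤ) with hr
      have hNpos : (0 : ℤ) < N := by exact_mod_cast hN2
      have hr0 : 0 ≤ r := Int.emod_nonneg c (ne_of_gt hNpos)
      have hrN : r < N := Int.emod_lt_of_pos c hNpos
      have hy' : (∑ k ∈ m.support.erase j', m k • γ k) + q • ((N : ℤ) • γ j') ∈
          AddSubgroup.closure {y | ∃ j < j', y = γ j} :=
        AddSubgroup.add_mem _ hy (AddSubgroup.zsmul_mem _ hN3 _)
      obtain ⟨m', hm'lt, hm'dig, hm'sum⟩ := IH j' hj'i _ hy'
      refine ⟨m' + Finsupp.single j' r, ?_, ?_, ?_⟩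
      · intro k hk
        rcases Finset.mem_union.1 (Finsupp.support_add hk) with h | h
        · exact lt_trans (hm'lt k h) hj'i
        · have := Finsupp.support_single_subset h
          simp only [Finset.mem_singleton] at this
          subst this; exact hj'i
      · intro k hk
        by_cases hkj : k = j'
        · subst hkj
          have hm'k : m' j' = 0 := by
            by_contra h
            exact lt_irrefl j' (hm'lt j' (Finsupp.mem_support_iff.2 h))
          rw [Finsupp.add_apply, Finsupp.single_eq_same, hm'k, zero_add]
          refine ⟨hr0, ?_⟩
          rw [hN1]
          have : r.toNat < N := by omega
          exact_mod_cast this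
        · simpa [Finsupp.single_apply, Ne.symm hkj] using hm'dig k hk
      · have hqc : q • ((N : ℤ) • γ j') + r • γ j' = c • γ j' := by
          rw [smul_smul, ← add_smul]
          congr 1
          rw [hq, hr]
          linarith [Int.mul_ediv_add_emod c (N : ℤ)]
        rw [sum_smul_add, sum_smul_single, hsplit, ← hm'sum, ← hqc]
        abel

include hn in
private lemma rep_eq_zero (f : Ordinal →₀ ℤ)
    (hf : ∀ k ∈ f.support, ((f k).natAbs : ℕ∞) < n k)
    (h0 : (f.sum fun k c => c • γ k) = 0) : f = 0 := by
  by_contra hne0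
  have hne : f.support.Nonempty :=
    Finset.nonempty_iff_ne_empty.2 (fun h => hne0 (Finsupp.support_eq_empty.1 h))
  set j' := f.support.max' hne with hj'
  have hj'mem : j' ∈ f.support := f.support.max'_mem hne
  have hc0 : f j' ≠ 0 := Finsupp.mem_support_iff.1 hj'mem
  have hle : ∀ k ∈ f.support, k ≤ j' := fun k hk => f.support.le_max' k hk
  have hsplit : (f.sum fun k c => c • γ k) =
      f j' • γ j' + ∑ k ∈ f.support.erase j', f k • γ k := by
    rw [Finsupp.sum, ← Finset.add_sum_erase _ _ hj'mem]
  have hrest : ∀ k ∈ f.support.erase j', k < j' := by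
    intro k hk
    rcases Finset.mem_erase.1 hk with ⟨hne', hk'⟩
    exact lt_of_le_of_ne (hle k hk') hne'
  have hy : (∑ k ∈ f.support.erase j', f k • γ k) ∈
      AddSubgroup.closure {y | ∃ j < j', y = γ j} := by
    refine AddSubgroup.sum_mem _ fun k hk => ?_
    have hγ : γ k ∈ ({y | ∃ j < j', y = γ j} : Set Ψ) := ⟨k, hrest k hk, rfl⟩
    exact AddSubgroup.zsmul_mem _ (AddSubgroup.subset_closure hγ) _
  have hmem : f j' • γ j' ∈ AddSubgroup.closure {y | ∃ j < j', y = γ j} := by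
    have : f j' • γ j' = -(∑ k ∈ f.support.erase j', f k • γ k) := by
      rw [hsplit] at h0; linear_combination (norm := abel) h0
    rw [this]
    exact AddSubgroup.neg_mem _ hy
  have habs : ((f j').natAbs : ℤ) • γ j' ∈
      AddSubgroup.closure {y | ∃ j < j', y = γ j} := by
    rcases Int.natAbs_eq (f j') with h | h
    · rw [← h]; exact hmem
    · have : ((f j').natAbs : ℤ) • γ j' = -(f j' • γ j') := by
        rw [← neg_smul]; congr 1; omega
      rw [this]
      exact AddSubgroup.neg_mem _ hmem
  have hpos : 0 < (f j').natAbs := Int.natAbs_pos.2 hc0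
  have hle' : n j' ≤ ((f j').natAbs : ℕ∞) := n_le_of_mem γ n hn hpos habs
  exact absurd (lt_of_lt_of_le (hf j' hj'mem) hle') (lt_irrefl _)

end Aux

/-- Lemma 2.1, last claim: every element of `G_{i⁻}` has a unique
representation `Σ_{j<i} m_j·γ_j` with digit-bounded coefficients. -/
theorem stmt1 {Ψ : Type*} [AddCommGroup Ψ] (α : Ordinal) (γ : Ordinal → Ψ)
    (n : Ordinal → ℕ∞)
    (hn : ∀ i : Ordinal, n i = sInf {r : ℕ∞ | ∃ r' : ℕ, r = (r' : ℕ∞) ∧ 0 < r' ∧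
      (r' : ℤ) • γ i ∈ AddSubgroup.closure {x | ∃ j < i, x = γ j}})
    (i : Ordinal) (hi : i ≤ α)
    (x : Ψ) (hx : x ∈ AddSubgroup.closure {y | ∃ j < i, y = γ j}) :
    ∃! m : Ordinal → ℤ,
      (∀ j, ¬ j < i → m j = 0) ∧
      {j | m j ≠ 0}.Finite ∧
      (∀ j < i, n j ≠ ⊤ → 0 ≤ m j ∧ ((m j).toNat : ℕ∞) < n j) ∧
      x = ∑ᶠ j, m j • γ j := by
  obtain ⟨M, hMlt, hMdig, hMsum⟩ := exists_digit_rep γ n hn i x hx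
  have hMsupp : Function.support (fun j => (M j : ℤ) • γ j) ⊆ ↑M.support := by
    intro j hj
    simp only [Function.mem_support] at hj
    rw [Finset.mem_coe, Finsupp.mem_support_iff]
    intro h
    exact hj (by rw [h, zero_smul])
  have hfinsum : ∑ᶠ j, (M j : ℤ) • γ j = M.sum fun k c => c • γ k := by
    rw [finsum_eq_finset_sum_of_support_subset _ hMsupp, Finsupp.sum]
  refine ⟨fun j => M j, ⟨?_, ?_, ?_, ?_⟩, ?_⟩
  · intro j hj
    by_contra h
    exact hj (hMlt j (Finsupp.mem_support_iff.2 h))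
  · exact M.finite_support
  · intro j _ hj
    exact hMdig j hj
  · rw [hfinsum, hMsum]
  · -- uniqueness
    rintro m' ⟨h1, h2, h3, h4⟩
    have hdfin : (Function.support fun j => m' j - M j).Finite := by
      apply Set.Finite.subset (h2.union M.finite_support)
      intro j hj
      simp only [Function.mem_support] at hj
      by_contra h
      simp only [Set.mem_union, Set.mem_setOf_eq, Function.mem_support, not_or,
        not_not] at h
      exact hj (by rw [h.1, h.2, sub_zero])
    set f : Ordinal →₀ ℤ := Finsupp.ofSupportFinite _ hdfin with hf
    have hfapp : ∀ j, f j = m' j - M j := fun j => rfl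
    have hlti : ∀ k ∈ f.support, k < i := by
      intro k hk
      have hk' : f k ≠ 0 := Finsupp.mem_support_iff.1 hk
      by_contra h
      have h1' := h1 k h
      have h2' : M k = 0 := by
        by_contra hM
        exact h (hMlt k (Finsupp.mem_support_iff.2 hM))
      exact hk' (by rw [hfapp, h1', h2', sub_zero])
    have hfdig : ∀ k ∈ f.support, ((f k).natAbs : ℕ∞) < n k := by
      intro k hk
      have hki := hlti k hk
      rcases eq_or_ne (n k) ⊤ with htop | htop
      · rw [htop]; exact WithTop.coe_lt_top _
      · obtain ⟨N, hN1, _, _⟩ := n_attained γ n hn htop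
        obtain ⟨hm'0, hm'N⟩ := h3 k hki htop
        obtain ⟨hM0, hMN⟩ := hMdig k htop
        rw [hN1] at hm'N hMN ⊢
        have hm'N' : m' k < N := by
          have : (m' k).toNat < N := by exact_mod_cast hm'N
          omega
        have hMN' : (M k : ℤ) < N := by
          have : (M k).toNat < N := by exact_mod_cast hMN
          omega
        have : (f k).natAbs < N := by
          rw [hfapp]; omega
        exact_mod_cast this
    have hsum0 : (f.sum fun k c => c • γ k) = 0 := by
      classical
      set s : Finset Ordinal := M.support ∪ h2.toFinset with hs
      have hfs : f.support ⊆ s := by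
        intro k hk
        have hk' : f k ≠ 0 := Finsupp.mem_support_iff.1 hk
        rw [hfapp] at hk'
        rcases eq_or_ne (m' k) 0 with h | h
        · exact Finset.mem_union_left _ (Finsupp.mem_support_iff.2 (by
            intro hM; exact hk' (by rw [h, hM, sub_zero])))
        · exact Finset.mem_union_right _ (Set.Finite.mem_toFinset h2 |>.2 h)
      have hm's : Function.support (fun j => m' j • γ j) ⊆ ↑s := by
        intro j hj
        simp only [Function.mem_support] at hj
        have : m' j ≠ 0 := fun h => hj (by rw [h, zero_smul])
        exact Finset.mem_union_right _ (Set.Finite.mem_toFinset h2 |>.2 this)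
      have hMs : Function.support (fun j => (M j : ℤ) • γ j) ⊆ ↑s := by
        intro j hj
        exact Finset.mem_union_left _ (hMsupp hj)
      have e1 : x = ∑ j ∈ s, m' j • γ j := by
        rw [h4, finsum_eq_finset_sum_of_support_subset _ hm's]
      have e2 : x = ∑ j ∈ s, (M j : ℤ) • γ j := by
        rw [hMsum, ← hfinsum, finsum_eq_finset_sum_of_support_subset _ hMs]
      rw [Finsupp.sum]
      rw [Finset.sum_subset hfs (by
        intro k _ hk
        have : f k = 0 := Finsupp.notMem_support_iff.1 hk
        rw [this, zero_smul])]
      have : ∀ k ∈ s, f k • γ k = m' k • γ k - (M k : ℤ) • γ k := by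
        intro k _
        rw [hfapp, sub_smul]
      rw [Finset.sum_congr rfl this, Finset.sum_sub_distrib, ← e1, ← e2, sub_self]
    have hf0 := rep_eq_zero γ n hn f hfdig hsum0
    funext j
    have : f j = 0 := by rw [hf0]; rfl
    rw [hfapp] at this
    omega
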